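/- Let D be a semilocal Prüfer domain with quotient field K. Then the set F(D) of all D-submodules of K is the disjoint union, over A ∈ SkOver(D), of the sets Frac(A) of fractional ideals of A; that is, every D-submodule of K is a fractional ideal of exactly one element of the skeleton SkOver(D). -/

import Mathlib

/- Common background: Prüfer domains, semistar and (fractional) star operations,
standard decomposition, skeleton, supports, `hiSpec`, the rings `Z(P)`,
and the invariants `ω` and `ε`, following Spirito,
"Semistar operations on semilocal Prüfer domains". -/

set_option linter.unusedSectionVars false
set_option maxHeartbeats 1000000

open Pointwise

noncomputable section

namespace Paper

variable (D : Type*) [CommRing D] [IsDomain D]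
variable (K : Type*) [Field K] [Algebra D K] [IsFractionRing D K]

/-- The localization of `D` at a prime ideal `P`, viewed as an overring of `D`
inside its quotient field `K`. -/
def locAt (P : Ideal D) (hP : P.IsPrime) : Subalgebra D K :=
  Localization.subalgebra K (@Ideal.primeCompl D _ P hP)
    (fun _ hx => mem_nonZeroDivisors_of_ne_zero fun h => hx (h ▸ P.zero_mem))

/-- A Prüfer domain: every localization at a prime ideal is a valuation domain
(any two elements are comparable w.r.t. divisibility). -/
def IsPrufer : Prop :=
  ∀ (P : Ideal D) (hP : P.IsPrime), ∀ x y : locAt D K P hP, ∃ z, x * z = y ∨ y * z = x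

/-- A semilocal ring: finitely many maximal ideals. -/
def IsSemilocal : Prop := {I : Ideal D | I.IsMaximal}.Finite

/-- Two ideals are dependent if some nonzero prime ideal is contained in both. -/
def Dependent (M N : Ideal D) : Prop :=
  ∃ P : Ideal D, P.IsPrime ∧ P ≠ ⊥ ∧ P ≤ M ∧ P ≤ N

/-- The member of the standard decomposition corresponding to the dependence class
of the maximal ideal `M`: the intersection of the localizations of `D` at the
maximal ideals dependent on `M`. -/
def TOf (M : Ideal D) : Subalgebra D K :=
  sInf {A | ∃ (N : Ideal D) (hN : N.IsMaximal), Dependent D M N ∧ A = locAt D K N hN.isPrime}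

/-- The standard decomposition of `D`. -/
def stdDecomp : Set (Subalgebra D K) :=
  {T | ∃ M : Ideal D, M.IsMaximal ∧ T = TOf D K M}

/-- The skeleton of `Over(D)`: all intersections of subsets of the standard
decomposition (including the empty intersection `K` and the total one `D`). -/
def SkOver : Set (Subalgebra D K) :=
  {A | ∃ S ⊆ stdDecomp D K, A = sInf S}

/-- `I` is a fractional ideal of the overring `A` of `D`: it is an `A`-submodule
of `K` and `dI ⊆ A` for some nonzero `d ∈ K`. -/
def IsFracOf (A : Subalgebra D K) (I : Submodule D K) : Prop :=
  (∀ a ∈ A, ∀ x ∈ I, a * x ∈ I) ∧ ∃ d : K, d ≠ 0 ∧ ∀ x ∈ I, d * x ∈ A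

end Paper

namespace Paper

/-- A semistar operation on a domain `R` with quotient field `K`: an extensive,
order-preserving, idempotent self-map of the set of `R`-submodules of `K` such
that `(xI)^⋆ = x·I^⋆` for every nonzero `x ∈ K`. -/
structure Semistar (R : Type*) [CommRing R] (K : Type*) [Field K] [Algebra R K] where
  toFun : Submodule R K → Submodule R K
  le_star' : ∀ I, I ≤ toFun I
  mono' : ∀ ⦃I J⦄, I ≤ J → toFun I ≤ toFun J
  idem' : ∀ I, toFun (toFun I) = toFun I
  smul' : ∀ (x : K), x ≠ 0 → ∀ I,
    toFun (Submodule.span R {x} * I) = Submodule.span R {x} * toFun I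

namespace Semistar

variable {R : Type*} [CommRing R] {K : Type*} [Field K] [Algebra R K]

theorem ext' {s t : Semistar R K} (h : s.toFun = t.toFun) : s = t := by
  cases s; cases t; cases h; rfl

instance : PartialOrder (Semistar R K) where
  le s t := ∀ I, s.toFun I ≤ t.toFun I
  le_refl _ _ := le_rfl
  le_trans _ _ _ hab hbc I := (hab I).trans (hbc I)
  le_antisymm _ _ h h' := ext' (funext fun I => le_antisymm (h I) (h' I))

end Semistar

/-- The identity semistar operation `d`. -/
def dOp (R : Type*) [CommRing R] (K : Type*) [Field K] [Algebra R K] : Semistar R K where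
  toFun I := I
  le_star' _ := le_rfl
  mono' _ _ h := h
  idem' _ := rfl
  smul' _ _ _ := rfl

end Paper

namespace Paper

variable (D : Type*) [CommRing D] [IsDomain D]
variable (K : Type*) [Field K] [Algebra D K] [IsFractionRing D K]

/-- A fractional star operation on an overring `A` of `D` (inside `K`): a
semistar-like closure operation defined on the fractional ideals of `A`.
In particular `FracStar D K ⊥` is the set of fractional star operations on `D`. -/
structure FracStar (A : Subalgebra D K) where
  toFun : {I : Submodule D K // IsFracOf D K A I} → {I : Submodule D K // IsFracOf D K A I}
  le_star' : ∀ I, I.1 ≤ (toFun I).1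
  mono' : ∀ I J, I.1 ≤ J.1 → (toFun I).1 ≤ (toFun J).1
  idem' : ∀ I, toFun (toFun I) = toFun I
  smul' : ∀ (x : K), x ≠ 0 → ∀ I J, J.1 = Submodule.span D {x} * I.1 →
    (toFun J).1 = Submodule.span D {x} * (toFun I).1

namespace FracStar

variable {D K} {A : Subalgebra D K}

theorem ext' {s t : FracStar D K A} (h : s.toFun = t.toFun) : s = t := by
  cases s; cases t; cases h; rfl

instance : PartialOrder (FracStar D K A) where
  le s t := ∀ I, (s.toFun I).1 ≤ (t.toFun I).1
  le_refl _ _ := le_rfl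
  le_trans _ _ _ hab hbc I := (hab I).trans (hbc I)
  le_antisymm _ _ h h' := ext' (funext fun I => Subtype.ext (le_antisymm (h I) (h' I)))

end FracStar

/-- A fractional star operation on the overring `A` is a *star operation* if it
closes `A` itself. -/
def FracStar.IsStarOp {A : Subalgebra D K} (f : FracStar D K A) : Prop :=
  ∀ h : IsFracOf D K A (Subalgebra.toSubmodule A),
    (f.toFun ⟨Subalgebra.toSubmodule A, h⟩).1 = Subalgebra.toSubmodule A

/-- The support of a semistar operation on `D`: the elements `A` of the skeleton
such that `A^⋆` is a fractional ideal of `A`. -/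
def supp (s : Semistar D K) : Set (Subalgebra D K) :=
  {A | A ∈ SkOver D K ∧ IsFracOf D K A (s.toFun (Subalgebra.toSubmodule A))}

/-- The image of an ideal of `D` inside `K`. -/
def idealToK (P : Ideal D) : Submodule D K := Submodule.map (Algebra.linearMap D K) P

end Paper

namespace Paper

/-- An abstract fractional star operation on a commutative ring `A`, acting on
the fractional ideals of `A` inside its fraction ring. -/
structure AFracStar (A : Type*) [CommRing A] where
  toFun : FractionalIdeal (nonZeroDivisors A) (FractionRing A) →
    FractionalIdeal (nonZeroDivisors A) (FractionRing A)
  le_star' : ∀ I, I ≤ toFun I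
  mono' : ∀ ⦃I J⦄, I ≤ J → toFun I ≤ toFun J
  idem' : ∀ I, toFun (toFun I) = toFun I
  smul' : ∀ (x : FractionRing A), x ≠ 0 → ∀ I,
    toFun (FractionalIdeal.spanSingleton (nonZeroDivisors A) x * I) =
      FractionalIdeal.spanSingleton (nonZeroDivisors A) x * toFun I

namespace AFracStar

variable {A : Type*} [CommRing A]

theorem ext' {s t : AFracStar A} (h : s.toFun = t.toFun) : s = t := by
  cases s; cases t; cases h; rfl

instance : PartialOrder (AFracStar A) where
  le s t := ∀ I, s.toFun I ≤ t.toFun I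
  le_refl _ _ := le_rfl
  le_trans _ _ _ hab hbc I := (hab I).trans (hbc I)
  le_antisymm _ _ h h' := ext' (funext fun I => le_antisymm (h I) (h' I))

end AFracStar

/-- Abstract star operations on `A`: fractional star operations closing `A`. -/
def AStar (A : Type*) [CommRing A] : Type _ := {s : AFracStar A // s.toFun 1 = 1}

instance (A : Type*) [CommRing A] : PartialOrder (AStar A) :=
  inferInstanceAs (PartialOrder {s : AFracStar A // s.toFun 1 = 1})

end Paper

namespace Paper

variable (D : Type*) [CommRing D] [IsDomain D]

/-- `P` is a branching point of `Spec(D)`: the infimum (among the primes) of a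
family of pairwise incomparable primes not containing `P`. -/
def IsBranchPoint (P : Ideal D) : Prop :=
  ∃ S : Set (Ideal D), (∀ Q ∈ S, Q.IsPrime) ∧
    (S.Pairwise fun Q₁ Q₂ => ¬Q₁ ≤ Q₂ ∧ ¬Q₂ ≤ Q₁) ∧ P ∉ S ∧
    (∀ Q ∈ S, P ≤ Q) ∧ ∀ P' : Ideal D, P'.IsPrime → (∀ Q ∈ S, P' ≤ Q) → P' ≤ P

/-- The homeomorphically irreducible tree underlying `Spec(D)`: the zero ideal,
the maximal ideals and the branching points, ordered by inclusion. -/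
def hiSpec : Set (Ideal D) :=
  {P | P.IsPrime ∧ (P = ⊥ ∨ P.IsMaximal ∨ IsBranchPoint D P)}

/-- `Q` is the element of `hiSpec D` directly below `P`. -/
def DirectlyBelow (Q P : Ideal D) : Prop :=
  Q ∈ hiSpec D ∧ P ∈ hiSpec D ∧ Q < P ∧ ∀ R ∈ hiSpec D, Q < R → ¬R < P

/-- The localization of `D` at the prime ideal `P`, as an abstract ring. -/
abbrev locRing (P : Ideal D) (hP : P.IsPrime) : Type _ :=
  Localization (@Ideal.primeCompl D _ P hP)

/-- The valuation ring `Z(P) = D_P / Q·D_P`. -/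
abbrev Zring (P Q : Ideal D) (hP : P.IsPrime) : Type _ :=
  locRing D P hP ⧸ Ideal.map (algebraMap D (locRing D P hP)) Q

/-- `ω(P) = |FStar(Z(P))|`, where `Q` is the element of `hiSpec D` directly
below `P`. -/
def omegaAt (P Q : Ideal D) (hP : P.IsPrime) : ℕ :=
  Nat.card (AFracStar (Zring D P Q hP))

open Classical in
/-- `ε(P) = |Star(D_P)| ∈ {1,2}` for a (nonzero) prime `P`. -/
def epsilonOf (A : Ideal D) : ℕ :=
  if h : A.IsPrime then Nat.card (AStar (locRing D A h)) else 0

end Paper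

namespace Paper

theorem mem_hiSpec_prime {D : Type*} [CommRing D] [IsDomain D] {P : Ideal D}
    (h : P ∈ hiSpec D) : P.IsPrime := h.1

theorem maximal_mem_hiSpec {D : Type*} [CommRing D] [IsDomain D] {M : Ideal D}
    (h : M.IsMaximal) : M ∈ hiSpec D := ⟨h.isPrime, Or.inr (Or.inl h)⟩

end Paper

namespace Paper

section Statement0Aux

variable {D : Type*} [CommRing D] [IsDomain D]
variable {K : Type*} [Field K] [Algebra D K] [IsFractionRing D K]

theorem algMap_ne_zero {d : D} (hd : d ≠ 0) : algebraMap D K d ≠ 0 := fun h =>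
  hd (IsFractionRing.injective D K (h.trans (map_zero _).symm))

theorem mem_locAt_iff {P : Ideal D} {hP : P.IsPrime} {x : K} :
    x ∈ locAt D K P hP ↔ ∃ a s : D, s ∉ P ∧ algebraMap D K s * x = algebraMap D K a := by
  have h0 : ∀ s : D, s ∉ P → algebraMap D K s ≠ (0 : K) := fun s hs =>
    algMap_ne_zero (fun h => hs (h ▸ P.zero_mem))
  constructor
  · rintro ⟨a, s, hs, rfl⟩
    refine ⟨a, s, hs, ?_⟩
    rw [IsFractionRing.mk'_eq_div, mul_comm, div_mul_cancel₀ _ (h0 s hs)]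
  · rintro ⟨a, s, hs, hx⟩
    refine ⟨a, s, hs, ?_⟩
    rw [IsFractionRing.mk'_eq_div, eq_div_iff (h0 s hs), mul_comm x _, hx]

theorem locAt_compare (hPruf : IsPrufer D K) {P : Ideal D} (hP : P.IsPrime) (y z : K)
    (hz : z ≠ 0) :
    (∃ t ∈ locAt D K P hP, y = z * t) ∨ (∃ t ∈ locAt D K P hP, z = y * t) := by
  obtain ⟨a, b, hb, hy⟩ := IsFractionRing.div_surjective (A := D) y
  obtain ⟨c, e, he, hzeq⟩ := IsFractionRing.div_surjective (A := D) z
  have hbne : algebraMap D K b ≠ 0 :=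
    algMap_ne_zero (nonZeroDivisors.ne_zero hb)
  have hene : algebraMap D K e ≠ 0 :=
    algMap_ne_zero (nonZeroDivisors.ne_zero he)
  have hcne : algebraMap D K c ≠ 0 := by
    intro h
    apply hz
    rw [← hzeq, h, zero_div]
  obtain ⟨t, ht⟩ := hPruf P hP ⟨algebraMap D K (c * b), (locAt D K P hP).algebraMap_mem _⟩
    ⟨algebraMap D K (a * e), (locAt D K P hP).algebraMap_mem _⟩
  rcases ht with h | h
  · -- (cb) * t = ae  :  y = z * t
    left
    refine ⟨(t : K), t.2, ?_⟩
    have hcoe : algebraMap D K (c * b) * (t : K) = algebraMap D K (a * e) :=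
      congrArg Subtype.val h
    rw [map_mul, map_mul] at hcoe
    rw [← hy, ← hzeq]
    field_simp
    linear_combination -hcoe
  · -- (ae) * t = cb  :  z = y * t
    right
    refine ⟨(t : K), t.2, ?_⟩
    have hcoe : algebraMap D K (a * e) * (t : K) = algebraMap D K (c * b) :=
      congrArg Subtype.val h
    rw [map_mul, map_mul] at hcoe
    rw [← hy, ← hzeq]
    field_simp
    linear_combination -hcoe

theorem mem_or_inv_mem (hPruf : IsPrufer D K) {P : Ideal D} (hP : P.IsPrime) (z : K)
    (hz : z ≠ 0) : z ∈ locAt D K P hP ∨ z⁻¹ ∈ locAt D K P hP := by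
  rcases locAt_compare hPruf hP 1 z hz with ⟨t, ht, h⟩ | ⟨t, ht, h⟩
  · right
    rwa [inv_eq_of_mul_eq_one_right h.symm]
  · left
    rwa [h.trans (one_mul t)]

theorem primes_comparable (hPruf : IsPrufer D K) {N P Q : Ideal D} (hN : N.IsPrime)
    (hP : P.IsPrime) (hQ : Q.IsPrime) (hPN : P ≤ N) (hQN : Q ≤ N) : P ≤ Q ∨ Q ≤ P := by
  by_cases h : P ≤ Q
  · exact Or.inl h
  right
  obtain ⟨p, hpP, hpQ⟩ := Set.not_subset.mp h
  intro q hq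
  by_cases hq0 : q = 0
  · exact hq0 ▸ P.zero_mem
  have hp0 : p ≠ 0 := fun h0 => hpQ (h0 ▸ Q.zero_mem)
  rcases locAt_compare hPruf hN (algebraMap D K p) (algebraMap D K q)
      (algMap_ne_zero hq0) with ⟨t, ht, heq⟩ | ⟨t, ht, heq⟩
  · -- p = q * t : then p ∈ Q, contradiction
    exfalso
    obtain ⟨a, s, hs, hst⟩ := mem_locAt_iff.mp ht
    have : algebraMap D K (s * p) = algebraMap D K (q * a) := by
      rw [map_mul, map_mul, heq]
      ring_nf
      linear_combination algebraMap D K q * hst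
    have hsp : s * p = q * a := IsFractionRing.injective D K this
    have : s * p ∈ Q := hsp ▸ Q.mul_mem_right a hq
    rcases hQ.mem_or_mem this with h' | h'
    · exact hs (hQN h')
    · exact hpQ h'
  · -- q = p * t : then q ∈ P
    obtain ⟨a, s, hs, hst⟩ := mem_locAt_iff.mp ht
    have : algebraMap D K (s * q) = algebraMap D K (p * a) := by
      rw [map_mul, map_mul, heq]
      ring_nf
      linear_combination algebraMap D K p * hst
    have hsq : s * q = p * a := IsFractionRing.injective D K this
    have : s * q ∈ P := hsq ▸ P.mul_mem_right a hpP
    rcases hP.mem_or_mem this with h' | h'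
    · exact absurd (hPN h') hs
    · exact h'

theorem dependent_symm {M N : Ideal D} (h : Dependent D M N) : Dependent D N M := by
  obtain ⟨P, h1, h2, h3, h4⟩ := h
  exact ⟨P, h1, h2, h4, h3⟩

theorem dependent_trans (hPruf : IsPrufer D K) {X Y Z : Ideal D} (hY : Y.IsPrime)
    (h1 : Dependent D X Y) (h2 : Dependent D Y Z) : Dependent D X Z := by
  obtain ⟨P, hP, hP0, hPX, hPY⟩ := h1
  obtain ⟨Q, hQ, hQ0, hQY, hQZ⟩ := h2
  rcases primes_comparable (K := K) hPruf hY hP hQ hPY hQY with h | h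
  · exact ⟨P, hP, hP0, hPX, le_trans h hQZ⟩
  · exact ⟨Q, hQ, hQ0, le_trans h hPX, hQZ⟩

theorem mem_TOf {M : Ideal D} {x : K} :
    x ∈ TOf D K M ↔
      ∀ (N : Ideal D) (hN : N.IsMaximal), Dependent D M N → x ∈ locAt D K N hN.isPrime := by
  constructor
  · intro h N hN hdep
    exact Algebra.mem_sInf.mp h _ ⟨N, hN, hdep, rfl⟩
  · intro h
    refine Algebra.mem_sInf.mpr ?_
    rintro A ⟨N, hN, hdep, rfl⟩
    exact h N hN hdep

theorem TOf_eq_of_dependent (hPruf : IsPrufer D K) {M N : Ideal D} (hM : M.IsMaximal)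
    (hN : N.IsMaximal) (h : Dependent D M N) : TOf D K M = TOf D K N := by
  have key : ∀ x : K, x ∈ TOf D K M ↔ x ∈ TOf D K N := by
    intro x
    rw [mem_TOf, mem_TOf]
    constructor
    · intro hx N' hN' hdep
      exact hx N' hN' (dependent_trans (K := K) hPruf hN.isPrime h hdep)
    · intro hx N' hN' hdep
      exact hx N' hN' (dependent_trans (K := K) hPruf hM.isPrime (dependent_symm h) hdep)
  exact SetLike.ext key

theorem TOf_le_locAt {M : Ideal D} (hbot : M ≠ ⊥) (hM : M.IsMaximal) :
    TOf D K M ≤ locAt D K M hM.isPrime := fun x hx =>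
  mem_TOf.mp hx M hM ⟨M, hM.isPrime, hbot, le_rfl, le_rfl⟩

theorem le_mul_subalgebra (I : Submodule D K) (A : Subalgebra D K) :
    I ≤ I * Subalgebra.toSubmodule A := fun x hx => by
  simpa using Submodule.mul_mem_mul hx
    (show (1 : K) ∈ Subalgebra.toSubmodule A from A.one_mem)

theorem mul_stab {I : Submodule D K} {A : Subalgebra D K} {a x : K} (ha : a ∈ A)
    (hx : x ∈ I * Subalgebra.toSubmodule A) : a * x ∈ I * Subalgebra.toSubmodule A := by
  refine Submodule.mul_induction_on (C := fun x => a * x ∈ I * Subalgebra.toSubmodule A) hx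
    (fun m hm n hn => ?_) (fun y z hy hz => ?_)
  · show a * (m * n) ∈ I * Subalgebra.toSubmodule A
    rw [show a * (m * n) = m * (a * n) by ring]
    exact Submodule.mul_mem_mul hm (A.mul_mem ha hn)
  · show a * (y + z) ∈ I * Subalgebra.toSubmodule A
    rw [mul_add]
    exact Submodule.add_mem _ hy hz

theorem mul_stab_left {I : Submodule D K} {A : Subalgebra D K} {z x : K}
    (hstab : ∀ y ∈ I, z * y ∈ I) (hx : x ∈ I * Subalgebra.toSubmodule A) :
    z * x ∈ I * Subalgebra.toSubmodule A := by
  refine Submodule.mul_induction_on (C := fun x => z * x ∈ I * Subalgebra.toSubmodule A) hx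
    (fun m hm n hn => ?_) (fun y w hy hw => ?_)
  · show z * (m * n) ∈ I * Subalgebra.toSubmodule A
    rw [show z * (m * n) = (z * m) * n by ring]
    exact Submodule.mul_mem_mul (hstab m hm) hn
  · show z * (y + w) ∈ I * Subalgebra.toSubmodule A
    rw [mul_add]
    exact Submodule.add_mem _ hy hw

theorem mem_of_forall_loc {I : Submodule D K} {x : K}
    (h : ∀ (N : Ideal D) (hN : N.IsMaximal),
      x ∈ I * Subalgebra.toSubmodule (locAt D K N hN.isPrime)) : x ∈ I := by
  have key : ∀ (N : Ideal D) (hN : N.IsMaximal), ∃ s : D, s ∉ N ∧ s • x ∈ I := by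
    intro N hN
    refine Submodule.mul_induction_on (C := fun x => ∃ s : D, s ∉ N ∧ s • x ∈ I) (h N hN)
      (fun m hm n hn => ?_) (fun y z hy hz => ?_)
    · show ∃ s : D, s ∉ N ∧ s • (m * n) ∈ I
      obtain ⟨a, s, hs, hsn⟩ := mem_locAt_iff.mp hn
      refine ⟨s, hs, ?_⟩
      have : s • (m * n) = a • m := by
        rw [Algebra.smul_def, Algebra.smul_def, show algebraMap D K s * (m * n)
          = m * (algebraMap D K s * n) by ring, hsn]
        ring
      rw [this]
      exact I.smul_mem a hm
    · show ∃ s : D, s ∉ N ∧ s • (y + z) ∈ I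
      obtain ⟨s₁, hs₁, h₁⟩ := hy
      obtain ⟨s₂, hs₂, h₂⟩ := hz
      refine ⟨s₁ * s₂, fun hmem => ((hN.isPrime.mem_or_mem hmem).elim hs₁ hs₂), ?_⟩
      have : (s₁ * s₂) • (y + z) = s₂ • (s₁ • y) + s₁ • (s₂ • z) := by
        rw [smul_add, smul_smul, smul_smul, mul_comm s₂ s₁]
      rw [this]
      exact I.add_mem (I.smul_mem _ h₁) (I.smul_mem _ h₂)
  have hJ : (Submodule.comap (LinearMap.toSpanSingleton D K x) I) = ⊤ := by
    by_contra hne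
    obtain ⟨N, hN, hle⟩ := Ideal.exists_le_maximal _ hne
    obtain ⟨s, hs, hsx⟩ := key N hN
    exact hs (hle (by simpa [Submodule.mem_comap, LinearMap.toSpanSingleton_apply] using hsx))
  have h1 : (1 : D) ∈ Submodule.comap (LinearMap.toSpanSingleton D K x) I := hJ ▸ trivial
  simpa [Submodule.mem_comap, LinearMap.toSpanSingleton_apply] using h1

theorem exists_bound (hPruf : IsPrufer D K) {N : Ideal D} (hN : N.IsPrime)
    {J : Submodule D K} (hstab : ∀ t ∈ locAt D K N hN, ∀ y ∈ J, t * y ∈ J)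
    (hJ : J ≠ ⊤) : ∃ x : K, x ≠ 0 ∧ ∀ y ∈ J, x * y ∈ locAt D K N hN := by
  obtain ⟨z, hz⟩ : ∃ z : K, z ∉ J := by
    by_contra h
    push_neg at h
    exact hJ (eq_top_iff.mpr fun y _ => h y)
  have hz0 : z ≠ 0 := fun h => hz (h ▸ J.zero_mem)
  refine ⟨z⁻¹, inv_ne_zero hz0, fun y hy => ?_⟩
  rcases locAt_compare hPruf hN y z hz0 with ⟨t, ht, hyt⟩ | ⟨t, ht, hzt⟩
  · rw [hyt, show z⁻¹ * (z * t) = t by field_simp]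
    exact ht
  · exact absurd (show z ∈ J by rw [hzt, mul_comm]; exact hstab t ht y hy) hz

theorem exists_D_bound {N : Ideal D} (hN : N.IsPrime) (I : Submodule D K)
    (hx : ∃ x : K, x ≠ 0 ∧ ∀ y ∈ I, x * y ∈ locAt D K N hN) :
    ∃ d : D, d ≠ 0 ∧ ∀ y ∈ I, algebraMap D K d * y ∈ locAt D K N hN := by
  obtain ⟨x, hx0, hxI⟩ := hx
  obtain ⟨a, b, hb, hab⟩ := IsFractionRing.div_surjective (A := D) x
  have hbne : algebraMap D K b ≠ 0 := algMap_ne_zero (nonZeroDivisors.ne_zero hb)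
  have ha0 : a ≠ 0 := by
    rintro rfl
    rw [map_zero, zero_div] at hab
    exact hx0 hab.symm
  refine ⟨a, ha0, fun y hy => ?_⟩
  have heq : algebraMap D K a * y = algebraMap D K b * (x * y) := by
    rw [← hab]
    field_simp
  rw [heq]
  exact (locAt D K N hN).mul_mem ((locAt D K N hN).algebraMap_mem b) (hxI y hy)

theorem mul_prime_mem (hPruf : IsPrufer D K) {P N N' : Ideal D} (hP : P.IsPrime)
    (hN : N.IsPrime) (hN' : N'.IsPrime) (hPN : P ≤ N) (hPN' : P ≤ N') {p : D} (hp : p ∈ P)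
    {t : K} (ht : t ∈ locAt D K N hN) : algebraMap D K p * t ∈ locAt D K N' hN' := by
  by_cases hz : algebraMap D K p * t = 0
  · rw [hz]
    exact (locAt D K N' hN').zero_mem
  rcases mem_or_inv_mem hPruf hN' _ hz with h | h
  · exact h
  · exfalso
    obtain ⟨c, v, hv, hvc⟩ := mem_locAt_iff.mp h
    have hveq : algebraMap D K v = algebraMap D K c * (algebraMap D K p * t) := by
      rw [← hvc]
      rw [mul_assoc, inv_mul_cancel₀ hz, mul_one]
    obtain ⟨a, s, hs, hst⟩ := mem_locAt_iff.mp ht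
    have : algebraMap D K (v * s) = algebraMap D K (c * p * a) := by
      rw [map_mul, map_mul, map_mul, hveq]
      rw [show algebraMap D K c * (algebraMap D K p * t) * algebraMap D K s
        = algebraMap D K c * algebraMap D K p * (algebraMap D K s * t) by ring, hst]
    have hvs : v * s = c * p * a := IsFractionRing.injective D K this
    have hmem : v * s ∈ P := hvs ▸ (by
      have : c * p * a = p * (c * a) := by ring
      rw [this]
      exact P.mul_mem_right _ hp)
    rcases hP.mem_or_mem hmem with h' | h'
    · exact hv (hPN' h')
    · exact hs (hPN h')

theorem locAt_ne_top {N : Ideal D} (hN : N.IsPrime) (h0 : N ≠ ⊥) :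
    locAt D K N hN ≠ ⊤ := by
  obtain ⟨m, hm, hm0⟩ := Submodule.exists_mem_ne_zero_of_ne_bot h0
  intro htop
  have hmem : (algebraMap D K m)⁻¹ ∈ locAt D K N hN := by
    rw [htop]
    trivial
  obtain ⟨a, s, hs, hst⟩ := mem_locAt_iff.mp hmem
  have hmne : algebraMap D K m ≠ 0 := algMap_ne_zero hm0
  have : algebraMap D K s = algebraMap D K (a * m) := by
    rw [map_mul, ← hst]
    field_simp
  exact hs (IsFractionRing.injective D K this ▸ N.mul_mem_left a hm)

theorem eq_top_of_indep (hPruf : IsPrufer D K) (hsl : IsSemilocal D) {N : Ideal D}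
    (hN : N.IsMaximal) (E : Subalgebra D K) (h1 : locAt D K N hN.isPrime ≤ E)
    (h2 : ∀ w : K, (∀ (N' : Ideal D) (hN' : N'.IsMaximal), ¬ Dependent D N N' →
      w ∈ locAt D K N' hN'.isPrime) → w ∈ E) :
    E = ⊤ := by
  classical
  by_contra hne
  obtain ⟨z, hz⟩ : ∃ z : K, z ∉ E := by
    by_contra h
    push_neg at h
    exact hne (top_unique fun y _ => h y)
  have hz0 : z ≠ 0 := fun h => hz (h ▸ E.zero_mem)
  -- the set of "nonunits relative to E" in D
  set Pc : Set D := {c | ¬ ∃ w ∈ E, algebraMap D K c * w = 1} with hPcdef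
  have hval : ∀ w : K, w ≠ 0 → w ∈ E ∨ w⁻¹ ∈ E := fun w hw =>
    (mem_or_inv_mem hPruf hN.isPrime w hw).imp (fun h => h1 h) (fun h => h1 h)
  have hPadd : ∀ a b : D, a ∈ Pc → b ∈ Pc → a + b ∈ Pc := by
    intro a b ha hb
    rintro ⟨w, hw, hab⟩
    by_cases ha0 : a = 0
    · exact hb ⟨w, hw, by rw [← hab, ha0, zero_add]⟩
    by_cases hb0 : b = 0
    · exact ha ⟨w, hw, by rw [← hab, hb0, add_zero]⟩
    have hane : algebraMap D K a ≠ 0 := algMap_ne_zero ha0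
    have hbne : algebraMap D K b ≠ 0 := algMap_ne_zero hb0
    set q : K := algebraMap D K a / algebraMap D K b with hq
    have hq0 : q ≠ 0 := div_ne_zero hane hbne
    rcases hval q hq0 with hqE | hqE
    · refine hb ⟨w * (q + 1), E.mul_mem hw (E.add_mem hqE E.one_mem), ?_⟩
      have : algebraMap D K b * (w * (q + 1)) = algebraMap D K (a + b) * w := by
        rw [map_add]
        field_simp [hq]
        have hqb : algebraMap D K b * q = algebraMap D K a := by
          rw [hq]
          field_simp
        linear_combination w * hqb
      rw [this, hab]
    · have hqinv : q⁻¹ = algebraMap D K b / algebraMap D K a := by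
        rw [hq, inv_div]
      refine ha ⟨w * (q⁻¹ + 1), E.mul_mem hw (E.add_mem hqE E.one_mem), ?_⟩
      have : algebraMap D K a * (w * (q⁻¹ + 1)) = algebraMap D K (a + b) * w := by
        rw [map_add, hqinv]
        field_simp
        ring
      rw [this, hab]
  have hPsmul : ∀ (c : D) (a : D), a ∈ Pc → c * a ∈ Pc := by
    intro c a ha
    rintro ⟨w, hw, hcw⟩
    refine ha ⟨algebraMap D K c * w, E.mul_mem (E.algebraMap_mem c) hw, ?_⟩
    rw [← hcw, map_mul]
    ring
  set P : Ideal D :=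
    { carrier := Pc
      add_mem' := fun {a b} ha hb => hPadd a b ha hb
      zero_mem' := by
        rintro ⟨w, hw, h0⟩
        rw [map_zero, zero_mul] at h0
        exact zero_ne_one h0
      smul_mem' := fun c {a} ha => hPsmul c a ha } with hPdef
  have hPmem : ∀ a : D, a ∈ P ↔ ¬ ∃ w ∈ E, algebraMap D K a * w = 1 := fun a => Iff.rfl
  have hPprime : P.IsPrime := by
    constructor
    · rw [Ideal.ne_top_iff_one]
      intro h1
      exact (hPmem 1).mp h1 ⟨1, E.one_mem, by rw [map_one, one_mul]⟩
    · intro a b hab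
      by_contra hcon
      push_neg at hcon
      obtain ⟨ha, hb⟩ := hcon
      obtain ⟨wa, hwa, hwa1⟩ : ∃ w ∈ E, algebraMap D K a * w = 1 := by
        by_contra h
        exact ha h
      obtain ⟨wb, hwb, hwb1⟩ : ∃ w ∈ E, algebraMap D K b * w = 1 := by
        by_contra h
        exact hb h
      refine ((hPmem (a * b)).mp hab) ⟨wa * wb, E.mul_mem hwa hwb, ?_⟩
      rw [map_mul]
      rw [show algebraMap D K a * algebraMap D K b * (wa * wb)
        = (algebraMap D K a * wa) * (algebraMap D K b * wb) by ring, hwa1, hwb1, one_mul]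
  have hPN : P ≤ N := by
    intro a ha
    by_contra haN
    have ha0 : a ≠ 0 := fun h => haN (h ▸ N.zero_mem)
    have hane : algebraMap D K a ≠ 0 := algMap_ne_zero ha0
    have hmem : (algebraMap D K a)⁻¹ ∈ locAt D K N hN.isPrime :=
      mem_locAt_iff.mpr ⟨1, a, haN, by rw [map_one, mul_inv_cancel₀ hane]⟩
    exact ((hPmem a).mp ha) ⟨(algebraMap D K a)⁻¹, h1 hmem, mul_inv_cancel₀ hane⟩
  -- P is nonzero: the denominator of z lies in P
  obtain ⟨c, e, he, hce⟩ := IsFractionRing.div_surjective (A := D) z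
  have he0 : e ≠ 0 := nonZeroDivisors.ne_zero he
  have heP : e ∈ P := by
    intro hw
    obtain ⟨w, hw, hew⟩ := hw
    apply hz
    have : z = algebraMap D K c * w := by
      rw [← hce]
      have hene : algebraMap D K e ≠ 0 := algMap_ne_zero he0
      field_simp
      linear_combination (-(algebraMap D K c)) * hew
    rw [this]
    exact E.mul_mem (E.algebraMap_mem c) hw
  have hPbot : P ≠ ⊥ := by
    intro h
    rw [h] at heP
    exact he0 (by simpa using heP)
  -- the finitely many maximal ideals independent of N
  set Indep : Set (Ideal D) := {N' | N'.IsMaximal ∧ ¬ Dependent D N N'} with hIndep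
  have hIfin : Indep.Finite := hsl.subset fun N' hN' => hN'.1
  have hnotle : ∀ N' ∈ Indep, ¬ P ≤ N' := by
    rintro N' ⟨hN', hdep⟩ hle
    exact hdep ⟨P, hPprime, hPbot, hPN, hle⟩
  -- prime avoidance: find u ∈ P avoiding all N' ∈ Indep
  obtain ⟨u, huP, hu⟩ : ∃ u ∈ P, ∀ N' ∈ Indep, u ∉ N' := by
    have := (Ideal.subset_union_prime (s := hIfin.toFinset) (f := id) N N
      (fun i hi _ _ => ((hIfin.mem_toFinset.mp hi).1.isPrime)) (I := P))
    by_contra hcon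
    push_neg at hcon
    have hsub : (P : Set D) ⊆ ⋃ i ∈ (hIfin.toFinset : Set (Ideal D)), (id i : Ideal D) := by
      intro x hx
      obtain ⟨N', hN', hxN'⟩ := hcon x hx
      exact Set.mem_biUnion (hIfin.mem_toFinset.mpr hN') hxN'
    obtain ⟨i, hi, hle⟩ := this.mp hsub
    exact hnotle i (hIfin.mem_toFinset.mp hi) hle
  have hu0 : u ≠ 0 := by
    rintro rfl
    -- then Indep is empty, so every element of K is in E, contradiction with z
    apply hz
    apply h2
    intro N' hN' hdep
    exact absurd (N'.zero_mem) (hu N' ⟨hN', hdep⟩)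
  have hune : algebraMap D K u ≠ 0 := algMap_ne_zero hu0
  have huinv : (algebraMap D K u)⁻¹ ∈ E := by
    apply h2
    intro N' hN' hdep
    exact mem_locAt_iff.mpr ⟨1, u, hu N' ⟨hN', hdep⟩, by rw [map_one, mul_inv_cancel₀ hune]⟩
  exact ((hPmem u).mp huP) ⟨(algebraMap D K u)⁻¹, huinv, mul_inv_cancel₀ hune⟩

end Statement0Aux

end Paper

namespace Paper

/-- Let `D` be a semilocal Prüfer domain with quotient field `K`.
Then every (nonzero) `D`-submodule of `K` is a fractional ideal of exactly one
element of the skeleton `SkOver(D)`. -/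
theorem statement0
    (D : Type*) [CommRing D] [IsDomain D]
    (K : Type*) [Field K] [Algebra D K] [IsFractionRing D K]
    (hPruf : IsPrufer D K) (hsl : IsSemilocal D) :
    ∀ I : Submodule D K, I ≠ ⊥ →
      ∃! A : Subalgebra D K, A ∈ SkOver D K ∧ IsFracOf D K A I := by
  classical
  intro I hI
  by_cases hfield : (⊥ : Ideal D).IsMaximal
  · -- `D` is a field: the skeleton is `{⊤}` and everything is fractional over `⊤`.
    have hMbot : ∀ M : Ideal D, M.IsMaximal → M = ⊥ := fun M hM =>
      (hfield.eq_of_le hM.ne_top bot_le).symm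
    have hTall : ∀ M : Ideal D, TOf D K M = ⊤ := fun M =>
      eq_top_iff.mpr fun x _ => mem_TOf.mpr (fun N hN hdep => by
        obtain ⟨P, hP, hP0, hPM, hPN⟩ := hdep
        exact absurd (le_bot_iff.mp (hMbot N hN ▸ hPN : P ≤ ⊥)) hP0)
    have hSk : ∀ A ∈ SkOver D K, A = ⊤ := by
      rintro A ⟨S, hSsub, rfl⟩
      refine sInf_eq_top.mpr ?_
      intro T hT
      obtain ⟨M, hM, rfl⟩ := hSsub hT
      exact hTall M
    have htopSk : (⊤ : Subalgebra D K) ∈ SkOver D K :=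
      ⟨∅, Set.empty_subset _, sInf_empty.symm⟩
    have hfrac : IsFracOf D K ⊤ I := by
      constructor
      · intro a _ x hx
        obtain ⟨c, s, hs, hcs⟩ := IsFractionRing.div_surjective (A := D) a
        have hs0 : s ≠ 0 := nonZeroDivisors.ne_zero hs
        have hsu : IsUnit s := by
          by_contra hu
          obtain ⟨M, hM, hle⟩ := Ideal.exists_le_maximal (Ideal.span {s})
            (fun h => hu (Ideal.span_singleton_eq_top.mp h))
          have : s ∈ (⊥ : Ideal D) :=
            (hMbot M hM ▸ hle) (Ideal.mem_span_singleton_self s)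
          exact hs0 (by simpa using this)
        obtain ⟨v, hv⟩ := hsu.exists_right_inv
        have hv' : algebraMap D K s * algebraMap D K v = 1 := by
          rw [← map_mul, hv, map_one]
        have ha : a = algebraMap D K (c * v) := by
          rw [map_mul, ← hcs, div_eq_mul_inv, inv_eq_of_mul_eq_one_right hv']
        rw [ha, ← Algebra.smul_def]
        exact I.smul_mem _ hx
      · exact ⟨1, one_ne_zero, fun x _ => Algebra.mem_top⟩
    exact ⟨⊤, ⟨htopSk, hfrac⟩, fun A' hA' => hSk A' hA'.1⟩
  · -- `D` is not a field
    have hNbot : ∀ N : Ideal D, N.IsMaximal → N ≠ ⊥ := fun N hN h => hfield (h ▸ hN)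
    obtain ⟨S, hSdef⟩ : ∃ S : Set (Subalgebra D K), S = {T | ∃ (N : Ideal D) (hN : N.IsMaximal),
        I * Subalgebra.toSubmodule (locAt D K N hN.isPrime) ≠ ⊤ ∧ T = TOf D K N} := ⟨_, rfl⟩
    have hSmem : ∀ T : Subalgebra D K, T ∈ S ↔ ∃ (N : Ideal D) (hN : N.IsMaximal),
        I * Subalgebra.toSubmodule (locAt D K N hN.isPrime) ≠ ⊤ ∧ T = TOf D K N := by
      intro T
      rw [hSdef]
      exact Iff.rfl
    have hSsub : S ⊆ stdDecomp D K := by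
      intro T hT
      obtain ⟨N, hN, _, hTeq⟩ := (hSmem T).mp hT
      exact ⟨N, hN, hTeq⟩
    -- `I` is a module over `sInf S`
    have hstab : ∀ a ∈ sInf S, ∀ x ∈ I, a * x ∈ I := by
      intro a ha x hx
      apply mem_of_forall_loc (I := I)
      intro N hN
      by_cases hNt : I * Subalgebra.toSubmodule (locAt D K N hN.isPrime) = ⊤
      · rw [hNt]
        exact Submodule.mem_top
      · have haT : a ∈ TOf D K N :=
          Algebra.mem_sInf.mp ha _ ((hSmem _).mpr ⟨N, hN, hNt, rfl⟩)
        have haV : a ∈ locAt D K N hN.isPrime := TOf_le_locAt (hNbot N hN) hN haT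
        exact mul_stab haV (le_mul_subalgebra I _ hx)
    -- local denominators
    have hDloc : ∀ (N : Ideal D) (hN : N.IsMaximal),
        I * Subalgebra.toSubmodule (locAt D K N hN.isPrime) ≠ ⊤ →
        ∃ d : D, d ≠ 0 ∧ ∀ (N' : Ideal D) (hN' : N'.IsMaximal), Dependent D N N' →
          ∀ y ∈ I, algebraMap D K d * y ∈ locAt D K N' hN'.isPrime := by
      intro N hN hne
      obtain ⟨x, hx0, hxJ⟩ := exists_bound hPruf hN.isPrime
        (J := I * Subalgebra.toSubmodule (locAt D K N hN.isPrime))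
        (fun t ht y hy => mul_stab ht hy) hne
      obtain ⟨a, ha0, haI⟩ := exists_D_bound hN.isPrime I
        ⟨x, hx0, fun y hy => hxJ y (le_mul_subalgebra I _ hy)⟩
      have hDfin : {N' : Ideal D | N'.IsMaximal ∧ Dependent D N N'}.Finite :=
        hsl.subset fun N' hN' => hN'.1
      have hchoice : ∀ N' ∈ {N' : Ideal D | N'.IsMaximal ∧ Dependent D N N'},
          ∃ p : D, p ≠ 0 ∧ ∃ Q : Ideal D, Q.IsPrime ∧ p ∈ Q ∧ Q ≤ N ∧ Q ≤ N' := by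
        rintro N' ⟨hN', Q, hQ, hQ0, hQN, hQN'⟩
        obtain ⟨p, hp, hp0⟩ := Submodule.exists_mem_ne_zero_of_ne_bot hQ0
        exact ⟨p, hp0, Q, hQ, hp, hQN, hQN'⟩
      choose! p hp0 Q hQp hpQ hQN hQN' using hchoice
      refine ⟨a * ∏ N' ∈ hDfin.toFinset, p N', mul_ne_zero ha0
        (Finset.prod_ne_zero_iff.mpr fun N' hN' => hp0 N' (hDfin.mem_toFinset.mp hN')), ?_⟩
      intro N' hN' hdep y hy
      have hN'mem : N' ∈ hDfin.toFinset := hDfin.mem_toFinset.mpr ⟨hN', hdep⟩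
      have hN'set : N' ∈ {N' : Ideal D | N'.IsMaximal ∧ Dependent D N N'} := ⟨hN', hdep⟩
      have h2 : algebraMap D K (p N') * (algebraMap D K a * y) ∈ locAt D K N' hN'.isPrime :=
        mul_prime_mem hPruf (hQp N' hN'set) hN.isPrime hN'.isPrime (hQN N' hN'set)
          (hQN' N' hN'set) (hpQ N' hN'set) (haI y hy)
      have heq : algebraMap D K (a * ∏ N'' ∈ hDfin.toFinset, p N'') * y
          = algebraMap D K (∏ N'' ∈ hDfin.toFinset.erase N', p N'')
            * (algebraMap D K (p N') * (algebraMap D K a * y)) := by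
        rw [← Finset.mul_prod_erase _ _ hN'mem, map_mul, map_mul]
        ring
      rw [heq]
      exact (locAt D K N' hN'.isPrime).mul_mem
        ((locAt D K N' hN'.isPrime).algebraMap_mem _) h2
    -- global denominator
    have hBfin : {N : Ideal D | ∃ hN : N.IsMaximal,
        I * Subalgebra.toSubmodule (locAt D K N hN.isPrime) ≠ ⊤}.Finite :=
      hsl.subset (by rintro N ⟨hN, _⟩; exact hN)
    have hDloc' : ∀ N ∈ {N : Ideal D | ∃ hN : N.IsMaximal,
        I * Subalgebra.toSubmodule (locAt D K N hN.isPrime) ≠ ⊤},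
        ∃ d : D, d ≠ 0 ∧ ∀ (N' : Ideal D) (hN' : N'.IsMaximal), Dependent D N N' →
          ∀ y ∈ I, algebraMap D K d * y ∈ locAt D K N' hN'.isPrime := by
      rintro N ⟨hN, hne⟩
      exact hDloc N hN hne
    choose! dN hdN0 hdN using hDloc'
    have hd0 : (∏ N ∈ hBfin.toFinset, dN N) ≠ 0 :=
      Finset.prod_ne_zero_iff.mpr fun N hN => hdN0 N (hBfin.mem_toFinset.mp hN)
    have hdI : ∀ y ∈ I, algebraMap D K (∏ N ∈ hBfin.toFinset, dN N) * y ∈ sInf S := by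
      intro y hy
      refine Algebra.mem_sInf.mpr ?_
      intro T hT
      obtain ⟨N, hN, hne, hTeq⟩ := (hSmem T).mp hT
      subst hTeq
      refine mem_TOf.mpr ?_
      intro N' hN' hdep
      have hNB : N ∈ hBfin.toFinset := hBfin.mem_toFinset.mpr ⟨hN, hne⟩
      have h2 := hdN N ⟨hN, hne⟩ N' hN' hdep y hy
      have heq : algebraMap D K (∏ N'' ∈ hBfin.toFinset, dN N'') * y
          = algebraMap D K (∏ N'' ∈ hBfin.toFinset.erase N, dN N'')
            * (algebraMap D K (dN N) * y) := by
        rw [← Finset.mul_prod_erase _ _ hNB, map_mul]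
        ring
      rw [heq]
      exact (locAt D K N' hN'.isPrime).mul_mem
        ((locAt D K N' hN'.isPrime).algebraMap_mem _) h2
    refine ⟨sInf S, ⟨⟨S, hSsub, rfl⟩, hstab, algebraMap D K (∏ N ∈ hBfin.toFinset, dN N),
      algMap_ne_zero hd0, hdI⟩, ?_⟩
    -- uniqueness
    rintro A' ⟨⟨S', hS'sub, rfl⟩, hstab', dk, hdk0, hdkI⟩
    have hSS : S' = S := by
      ext T
      constructor
      · intro hT'
        obtain ⟨M', hM', hTeq⟩ := hS'sub hT'
        subst hTeq
        refine (hSmem _).mpr ⟨M', hM', ?_, rfl⟩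
        intro htop
        have hVle : sInf S' ≤ locAt D K M' hM'.isPrime :=
          le_trans (sInf_le hT') (TOf_le_locAt (hNbot M' hM') hM')
        have hall : ∀ z : K, dk * z ∈ locAt D K M' hM'.isPrime := by
          intro z
          have hz : z ∈ I * Subalgebra.toSubmodule (locAt D K M' hM'.isPrime) := by
            rw [htop]
            exact Submodule.mem_top
          refine Submodule.mul_induction_on
            (C := fun z => dk * z ∈ locAt D K M' hM'.isPrime) hz
            (fun m hm n hn => ?_) (fun y w hy hw => ?_)
          · show dk * (m * n) ∈ locAt D K M' hM'.isPrime
            rw [← mul_assoc]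
            exact (locAt D K M' hM'.isPrime).mul_mem (hVle (hdkI m hm)) hn
          · show dk * (y + w) ∈ locAt D K M' hM'.isPrime
            rw [mul_add]
            exact (locAt D K M' hM'.isPrime).add_mem hy hw
        have htop' : locAt D K M' hM'.isPrime = ⊤ := top_unique fun z _ => by
          have h := hall (dk⁻¹ * z)
          rwa [mul_inv_cancel_left₀ hdk0] at h
        exact locAt_ne_top hM'.isPrime (hNbot M' hM') htop'
      · intro hT
        obtain ⟨N, hN, hne, hTeq⟩ := (hSmem T).mp hT
        subst hTeq
        by_contra hT'
        apply hne
        set E : Subalgebra D K :=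
          { carrier := {w : K | ∀ y ∈ I * Subalgebra.toSubmodule (locAt D K N hN.isPrime),
              w * y ∈ I * Subalgebra.toSubmodule (locAt D K N hN.isPrime)}
            mul_mem' := fun {a b} ha hb y hy => by
              rw [mul_assoc]
              exact ha _ (hb _ hy)
            one_mem' := fun y hy => by rwa [one_mul]
            add_mem' := fun {a b} ha hb y hy => by
              rw [add_mul]
              exact Submodule.add_mem _ (ha _ hy) (hb _ hy)
            zero_mem' := fun y hy => by
              rw [zero_mul]
              exact Submodule.zero_mem _
            algebraMap_mem' := fun r y hy => by
              rw [← Algebra.smul_def]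
              exact Submodule.smul_mem _ r hy } with hEdef
        have hEmem : ∀ w : K, w ∈ E ↔
            ∀ y ∈ I * Subalgebra.toSubmodule (locAt D K N hN.isPrime),
              w * y ∈ I * Subalgebra.toSubmodule (locAt D K N hN.isPrime) := fun w => Iff.rfl
        have hEN : locAt D K N hN.isPrime ≤ E := fun t ht =>
          (hEmem t).mpr fun y hy => mul_stab ht hy
        have hE2 : ∀ w : K, (∀ (N' : Ideal D) (hN' : N'.IsMaximal), ¬ Dependent D N N' →
            w ∈ locAt D K N' hN'.isPrime) → w ∈ E := by
          intro w hw
          have hwS' : w ∈ sInf S' := by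
            refine Algebra.mem_sInf.mpr ?_
            intro T'' hT''
            obtain ⟨M'', hM'', hTeq''⟩ := hS'sub hT''
            subst hTeq''
            refine mem_TOf.mpr ?_
            intro N₁ hN₁ hdep₁
            refine hw N₁ hN₁ ?_
            intro hdepN
            have hNM : Dependent D N M'' :=
              dependent_trans (K := K) hPruf hN₁.isPrime hdepN (dependent_symm hdep₁)
            exact hT' (by
              rw [TOf_eq_of_dependent (K := K) hPruf hN hM'' hNM]
              exact hT'')
          exact (hEmem w).mpr fun y hy =>
            mul_stab_left (fun u hu => hstab' w hwS' u hu) hy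
        have hEtop : E = ⊤ := eq_top_of_indep hPruf hsl hN E hEN hE2
        obtain ⟨y₀, hy₀I, hy₀0⟩ := Submodule.exists_mem_ne_zero_of_ne_bot hI
        refine top_unique fun z _ => ?_
        have hzE : z * y₀⁻¹ ∈ E := by
          rw [hEtop]
          exact Algebra.mem_top
        have hz := (hEmem _).mp hzE y₀ (le_mul_subalgebra I _ hy₀I)
        rwa [mul_assoc, inv_mul_cancel₀ hy₀0, mul_one] at hz
    rw [hSS]

end Paper
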